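/- For every nonnegative integer n and all x, y (say rational numbers), one has the identity Σ_{k=0}^{n} C(n,k) · W_k(x) · y^{n-k} = W_n(x+y). -/

import Mathlib

/-- `Wgen n x = Σ_{k=0}^{⌊n/3⌋} C(2k,k)·C(3k,k)·C(n,3k)·x^{n-3k}`. -/
def Wgen (n : ℕ) (x : ℚ) : ℚ :=
  ∑ k ∈ Finset.range (n / 3 + 1),
    (Nat.choose (2 * k) k : ℚ) * (Nat.choose (3 * k) k : ℚ) *
      (Nat.choose n (3 * k) : ℚ) * x ^ (n - 3 * k)

lemma key (n m : ℕ) (h : m ≤ n) (x y : ℚ) :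
    ∑ k ∈ Finset.range (n + 1),
      (Nat.choose n k : ℚ) * (Nat.choose k m : ℚ) * x ^ (k - m) * y ^ (n - k)
      = (Nat.choose n m : ℚ) * (x + y) ^ (n - m) := by
  rw [add_pow, Finset.mul_sum]
  rw [← Finset.sum_range_add_sum_Ico _ (by omega : m ≤ n + 1)]
  have h1 : ∑ k ∈ Finset.range m,
      (Nat.choose n k : ℚ) * (Nat.choose k m : ℚ) * x ^ (k - m) * y ^ (n - k) = 0 := by
    apply Finset.sum_eq_zero
    intro k hk
    rw [Nat.choose_eq_zero_of_lt (Finset.mem_range.mp hk)]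
    push_cast; ring
  rw [h1, zero_add]
  rw [Finset.sum_Ico_eq_sum_range]
  have hr : n + 1 - m = (n - m) + 1 := by omega
  rw [hr]
  apply Finset.sum_congr rfl
  intro i hi
  have hi' : i ≤ n - m := Nat.lt_succ_iff.mp (Finset.mem_range.mp hi)
  have hc : Nat.choose n (m + i) * Nat.choose (m + i) m
      = Nat.choose n m * Nat.choose (n - m) i := by
    have := Nat.choose_mul (n := n) (k := m + i) (s := m) (by omega)
    simpa using this
  have hc' : (Nat.choose n (m + i) : ℚ) * (Nat.choose (m + i) m : ℚ)
      = (Nat.choose n m : ℚ) * (Nat.choose (n - m) i : ℚ) := by exact_mod_cast congrArg (Nat.cast : ℕ → ℚ) hc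
  have he1 : m + i - m = i := by omega
  have he2 : n - (m + i) = n - m - i := by omega
  rw [he1, he2]
  calc (Nat.choose n (m + i) : ℚ) * (Nat.choose (m + i) m : ℚ) * x ^ i * y ^ (n - m - i)
      = ((Nat.choose n (m + i) : ℚ) * (Nat.choose (m + i) m : ℚ)) * (x ^ i * y ^ (n - m - i)) := by ring
    _ = ((Nat.choose n m : ℚ) * (Nat.choose (n - m) i : ℚ)) * (x ^ i * y ^ (n - m - i)) := by rw [hc']
    _ = (Nat.choose n m : ℚ) * (x ^ i * y ^ (n - m - i) * (Nat.choose (n - m) i : ℚ)) := by ring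

theorem sum_choose_Wgen (n : ℕ) (x y : ℚ) :
    ∑ k ∈ Finset.range (n + 1), (Nat.choose n k : ℚ) * Wgen k x * y ^ (n - k)
      = Wgen n (x + y) := by
  unfold Wgen
  have step : ∀ k ∈ Finset.range (n + 1),
      (Nat.choose n k : ℚ) *
        (∑ j ∈ Finset.range (k / 3 + 1),
          (Nat.choose (2 * j) j : ℚ) * (Nat.choose (3 * j) j : ℚ) *
            (Nat.choose k (3 * j) : ℚ) * x ^ (k - 3 * j)) * y ^ (n - k)
      = ∑ j ∈ Finset.range (n / 3 + 1),
          (Nat.choose (2 * j) j : ℚ) * (Nat.choose (3 * j) j : ℚ) *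
            ((Nat.choose n k : ℚ) * (Nat.choose k (3 * j) : ℚ) * x ^ (k - 3 * j) * y ^ (n - k)) := by
    intro k hk
    have hk' : k ≤ n := Nat.lt_succ_iff.mp (Finset.mem_range.mp hk)
    have hsub : Finset.range (k / 3 + 1) ⊆ Finset.range (n / 3 + 1) := by
      apply Finset.range_subset_range.mpr
      have : k / 3 ≤ n / 3 := Nat.div_le_div_right hk'
      omega
    rw [← Finset.sum_subset hsub (by
      intro j _ hj
      have h3 : k < 3 * j := by
        have := Finset.mem_range.not.mp hj
        omega
      rw [Nat.choose_eq_zero_of_lt h3]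
      push_cast; ring)]
    rw [Finset.mul_sum, Finset.sum_mul]
    apply Finset.sum_congr rfl
    intro j _
    ring
  rw [Finset.sum_congr rfl step, Finset.sum_comm]
  apply Finset.sum_congr rfl
  intro j hj
  have hj' : 3 * j ≤ n := by
    have := Nat.lt_succ_iff.mp (Finset.mem_range.mp hj)
    omega
  rw [← Finset.mul_sum, key n (3 * j) hj' x y]
  ring
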